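/- If m is even, then N M^{-1} N = 0, where N is the m×m matrix with (0,0)-entry 1 and all other entries 0. -/

import Mathlib

open Matrix

/-- α_j = 1/(8j²−2). -/
noncomputable def alph (j : ℕ) : ℝ := 1 / (8 * (j : ℝ) ^ 2 - 2)

/-- The m×m tridiagonal matrix M with M₀₀ = 1/2, M_{j-1,j} = −α_j, M_{j,j-1} = α_j. -/
noncomputable def Mmat (m : ℕ) : Matrix (Fin m) (Fin m) ℝ :=
  Matrix.of fun i j =>
    if (i : ℕ) = 0 ∧ (j : ℕ) = 0 then 1 / 2
    else if (i : ℕ) + 1 = (j : ℕ) then - alph (j : ℕ)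
    else if (j : ℕ) + 1 = (i : ℕ) then alph (i : ℕ)
    else 0

/-- The m×m matrix N = e₀ e₀ᵀ. -/
noncomputable def Nmat (m : ℕ) : Matrix (Fin m) (Fin m) ℝ :=
  Matrix.of fun i j => if (i : ℕ) = 0 ∧ (j : ℕ) = 0 then 1 else 0

/-- The vector v: v_j = 2(2j+1) for even j (0 else) when m is odd;
    v_j = −2(2j+1) for odd j (0 else) when m is even. -/
noncomputable def vVec (m : ℕ) : Fin m → ℝ := fun j =>
  if Odd m then (if Even (j : ℕ) then 2 * (2 * (j : ℝ) + 1) else 0)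
  else (if Odd (j : ℕ) then -2 * (2 * (j : ℝ) + 1) else 0)

/-- The standard basis vector e₀. -/
noncomputable def e0vec (m : ℕ) : Fin m → ℝ := fun i => if (i : ℕ) = 0 then 1 else 0

lemma Mv_eq (m : ℕ) (hm : 2 ≤ m) (heven : Even m) : Mmat m *ᵥ vVec m = e0vec m := by
  have hnotodd : ¬ Odd m := Nat.not_odd_iff_even.mpr heven
  funext i
  show ∑ j, Mmat m i j * vVec m j = e0vec m i
  rcases Nat.even_or_odd (i : ℕ) with hie | hio
  · -- i even
    by_cases hi0 : (i : ℕ) = 0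
    · -- i = 0 : sum over {0, 1}
      set a : Fin m := ⟨0, by omega⟩ with ha
      set b : Fin m := ⟨1, by omega⟩ with hb
      have hav : (a : ℕ) = 0 := rfl
      have hbv : (b : ℕ) = 1 := rfl
      have hab : a ≠ b := Fin.ne_of_val_ne (by omega)
      have hz : ∀ x ∈ Finset.univ, x ∉ ({a, b} : Finset (Fin m)) →
          Mmat m i x * vVec m x = 0 := by
        intro j _ hj
        simp only [Finset.mem_insert, Finset.mem_singleton, not_or] at hj
        have hj0 : (j : ℕ) ≠ 0 := fun h => hj.1 (Fin.ext h)
        have hj1 : (j : ℕ) ≠ 1 := fun h => hj.2 (Fin.ext h)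
        have hM : Mmat m i j = 0 := by
          simp only [Mmat, of_apply]
          have c1 : ¬ ((i : ℕ) = 0 ∧ (j : ℕ) = 0) := by omega
          have c2 : ¬ ((i : ℕ) + 1 = (j : ℕ)) := by omega
          have c3 : ¬ ((j : ℕ) + 1 = (i : ℕ)) := by omega
          rw [if_neg c1, if_neg c2, if_neg c3]
        simp [hM]
      rw [← Finset.sum_subset (Finset.subset_univ {a, b}) hz, Finset.sum_pair hab]
      have e1 : Mmat m i a = 1 / 2 := by simp [Mmat, hi0, hav]
      have e2 : Mmat m i b = - alph 1 := by simp [Mmat, hi0, hbv]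
      have e3 : vVec m a = 0 := by simp [vVec, hnotodd, hav]
      have e4 : vVec m b = -6 := by
        simp [vVec, hnotodd]
        norm_num
      have e5 : e0vec m i = 1 := by simp [e0vec, hi0]
      rw [e1, e2, e3, e4, e5]
      norm_num [alph]
    · -- i even, i ≥ 2 : sum over {i-1, i+1}
      obtain ⟨c, hc⟩ := hie
      obtain ⟨d, hd⟩ := heven
      have hlt : (i : ℕ) + 1 < m := by have := i.isLt; omega
      set a : Fin m := ⟨(i : ℕ) - 1, by omega⟩ with ha
      set b : Fin m := ⟨(i : ℕ) + 1, hlt⟩ with hb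
      have hav : (a : ℕ) = (i : ℕ) - 1 := rfl
      have hbv : (b : ℕ) = (i : ℕ) + 1 := rfl
      have hab : a ≠ b := Fin.ne_of_val_ne (by omega)
      have hz : ∀ x ∈ Finset.univ, x ∉ ({a, b} : Finset (Fin m)) →
          Mmat m i x * vVec m x = 0 := by
        intro j _ hj
        simp only [Finset.mem_insert, Finset.mem_singleton, not_or] at hj
        have hj0 : (j : ℕ) ≠ (i : ℕ) - 1 := fun h => hj.1 (Fin.ext (h.trans hav.symm))
        have hj1 : (j : ℕ) ≠ (i : ℕ) + 1 := fun h => hj.2 (Fin.ext (h.trans hbv.symm))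
        have hM : Mmat m i j = 0 := by
          simp only [Mmat, of_apply]
          have c1 : ¬ ((i : ℕ) = 0 ∧ (j : ℕ) = 0) := by omega
          have c2 : ¬ ((i : ℕ) + 1 = (j : ℕ)) := by omega
          have c3 : ¬ ((j : ℕ) + 1 = (i : ℕ)) := by omega
          rw [if_neg c1, if_neg c2, if_neg c3]
        simp [hM]
      rw [← Finset.sum_subset (Finset.subset_univ {a, b}) hz, Finset.sum_pair hab]
      have e1 : Mmat m i a = alph (i : ℕ) := by
        simp only [Mmat, of_apply]
        have c1 : ¬ ((i : ℕ) = 0 ∧ (i : ℕ) - 1 = 0) := by omega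
        have c2 : ¬ ((i : ℕ) + 1 = (i : ℕ) - 1) := by omega
        have c3 : (i : ℕ) - 1 + 1 = (i : ℕ) := by omega
        split_ifs with h1 h2 h3 <;> first | rfl | omega
      have e2 : Mmat m i b = - alph ((i : ℕ) + 1) := by
        simp only [Mmat, of_apply]
        have c1 : ¬ ((i : ℕ) = 0 ∧ (i : ℕ) + 1 = 0) := by omega
        split_ifs with h1 h2 h3 <;> first | rfl | omega
      have e3 : vVec m a = -2 * (2 * (((i : ℕ) : ℝ) - 1) + 1) := by
        simp only [vVec, if_neg hnotodd]
        have c1 : Odd ((i : ℕ) - 1) := ⟨c - 1, by omega⟩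
        rw [if_pos c1, Nat.cast_sub (by omega : 1 ≤ (i : ℕ))]
        norm_num
      have e4 : vVec m b = -2 * (2 * (((i : ℕ) : ℝ) + 1) + 1) := by
        simp only [vVec, if_neg hnotodd]
        have c1 : Odd ((i : ℕ) + 1) := ⟨c, by omega⟩
        rw [if_pos c1]
        push_cast [hbv]
        ring
      have e5 : e0vec m i = 0 := by simp [e0vec, hi0]
      rw [e1, e2, e3, e4, e5, alph, alph]
      have hn2 : (2 : ℝ) ≤ ((i : ℕ) : ℝ) := by exact_mod_cast (by omega : 2 ≤ (i : ℕ))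
      have h1 : 8 * ((i : ℕ) : ℝ) ^ 2 - 2 ≠ 0 := by nlinarith
      have h2 : 8 * (((i : ℕ) : ℝ) + 1) ^ 2 - 2 ≠ 0 := by nlinarith
      push_cast
      field_simp
      ring
  · -- i odd : all terms zero
    have hterm : ∀ j : Fin m, Mmat m i j * vVec m j = 0 := by
      intro j
      rcases Nat.even_or_odd (j : ℕ) with hje | hjo
      · have hv : vVec m j = 0 := by
          simp [vVec, hnotodd, Nat.not_odd_iff_even.mpr hje]
        simp [hv]
      · have hM : Mmat m i j = 0 := by
          obtain ⟨x, hx⟩ := hio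
          obtain ⟨y, hy⟩ := hjo
          simp only [Mmat, of_apply]
          rw [if_neg (by omega), if_neg (by omega), if_neg (by omega)]
        simp [hM]
    rw [Finset.sum_eq_zero fun j _ => hterm j]
    obtain ⟨x, hx⟩ := hio
    simp [e0vec, hx]

/-- if m is even then N M⁻¹ N = 0. -/
theorem NMinvN_eq_zero_of_even (m : ℕ) (hm : 2 ≤ m) (heven : Even m) :
    Nmat m * (Mmat m)⁻¹ * Nmat m = 0 := by
  by_cases hdet : IsUnit (Mmat m).det
  · set z : Fin m := ⟨0, by omega⟩ with hz
    have hval : ∀ k : Fin m, ((k : ℕ) = 0) = (k = z) := by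
      intro k
      ext
      constructor
      · intro h; exact Fin.ext h
      · intro h; rw [h]
    have hinv : (Mmat m)⁻¹ *ᵥ e0vec m = vVec m := by
      rw [← Mv_eq m hm heven, Matrix.mulVec_mulVec, Matrix.nonsing_inv_mul _ hdet,
        Matrix.one_mulVec]
    have h00 : (Mmat m)⁻¹ z z = 0 := by
      have h := congrFun hinv z
      simp only [mulVec, dotProduct, e0vec, hval, mul_ite, mul_one, mul_zero,
        Finset.sum_ite_eq', Finset.mem_univ, if_true] at h
      rw [h]
      have : ¬ Odd ((z : Fin m) : ℕ) := by rw [show ((z : Fin m) : ℕ) = 0 from rfl]; decide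
      simp [vVec, this, Nat.not_odd_iff_even.mpr heven]
    ext i j
    simp only [Nmat, Matrix.mul_apply, of_apply, Matrix.zero_apply, ite_and, hval]
    by_cases hi : i = z
    · by_cases hj : j = z
      · simp [hi, hj, Finset.sum_ite_eq', Finset.sum_ite_eq, h00]
      · simp [hi, hj]
    · simp [hi]
  · rw [Matrix.nonsing_inv_apply_not_isUnit _ hdet]
    simp
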